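/- All colourations of A_n are mutation equivalent: for m ≥ 1, n ≥ 1 and any two tuples (c_1,…,c_{n−1}) and (c'_1,…,c'_{n−1}) in {0,1,…,m}^{n−1}, the m-coloured quiver with vertices 1,…,n and arrow pairs i+1 →(c_i) i, i →(m−c_i) i+1 for 1 ≤ i ≤ n−1 is mutation equivalent to the corresponding quiver with colours (c'_1,…,c'_{n−1}). -/

import Mathlib

namespace MutClassAn

open Finset

variable {V : Type} [Fintype V] [DecidableEq V]

/-- `M i j c` is the number of arrows from `i` to `j` of colour `c`.
An `m`-coloured quiver has no loops, is monochromatic and skew-symmetric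
(`c.rev = m - c` in `Fin (m+1)`). -/
def IsColouredQuiver {m : ℕ} (M : V → V → Fin (m + 1) → ℕ) : Prop :=
  (∀ i c, M i i c = 0) ∧
  (∀ i j c c', M i j c ≠ 0 → M i j c' ≠ 0 → c = c') ∧
  (∀ i j c, M i j c = M j i c.rev)

/-- A coloured quiver is simple if there is at most one arrow between any two
vertices in each direction. -/
def IsSimpleCQ {m : ℕ} (M : V → V → Fin (m + 1) → ℕ) : Prop :=
  ∀ i j : V, (∑ c, M i j c) ≤ 1

/-- Adjacency in the underlying graph. -/
def CQAdj {m : ℕ} (M : V → V → Fin (m + 1) → ℕ) (i j : V) : Prop :=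
  i ≠ j ∧ ∃ c, M i j c ≠ 0

/-- The colour of the (unique, for simple quivers) arrow from `i` to `j`. -/
def colourOf {m : ℕ} (M : V → V → Fin (m + 1) → ℕ) (i j : V) : ℕ :=
  ∑ c : Fin (m + 1), M i j c * c.val

/-- Buan–Thomas coloured quiver mutation at the vertex `j`. -/
def mutate {m : ℕ} (M : V → V → Fin (m + 1) → ℕ) (j : V) :
    V → V → Fin (m + 1) → ℕ := fun i k c =>
  if k = j then M i k (c + 1)
  else if i = j then M i k (c - 1)
  else ((M i k c : ℤ) - ∑ t ∈ Finset.univ.filter (fun t => t ≠ c), (M i k t : ℤ)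
      + ((M i j c : ℤ) - (M i j (c - 1) : ℤ)) * (M j k 0 : ℤ)
      + (M i j (Fin.last m) : ℤ) * ((M j k c : ℤ) - (M j k (c + 1) : ℤ))).toNat

/-- Mutation equivalence: the equivalence relation generated by single mutations. -/
def MutEquiv {m : ℕ} (M M' : V → V → Fin (m + 1) → ℕ) : Prop :=
  Relation.EqvGen (fun A B => ∃ v, mutate A v = B) M M'

/-- A hole is an induced cycle of length at least `4` in the underlying graph. -/
def HasHole {m : ℕ} (M : V → V → Fin (m + 1) → ℕ) : Prop :=
  ∃ k : ℕ, 4 ≤ k ∧ ∃ x : ZMod k → V, Function.Injective x ∧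
    (∀ i, CQAdj M (x i) (x (i + 1))) ∧
    ∀ i j : ZMod k, i ≠ j → j ≠ i + 1 → i ≠ j + 1 → ¬ CQAdj M (x i) (x j)

/-- A clique: a set of pairwise adjacent vertices. -/
def IsCliqueCQ {m : ℕ} (M : V → V → Fin (m + 1) → ℕ) (S : Set V) : Prop :=
  S.Pairwise (CQAdj M)

/-- The set of neighbours of a vertex. -/
def nbrs {m : ℕ} (M : V → V → Fin (m + 1) → ℕ) (v : V) : Set V :=
  {u | CQAdj M v u}

/-- Connectedness of the underlying graph. -/
def CQConnected {m : ℕ} (M : V → V → Fin (m + 1) → ℕ) : Prop :=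
  ∀ u w : V, Relation.ReflTransGen (CQAdj M) u w

/-- Condition (1) of the class `𝒬ₙᵐ`: the neighbourhood of every vertex is covered
by two cliques of sizes `r, k ≤ m + 2` with `r + k = z + 2`, with no arrows between
the two cliques away from the vertex. -/
def Cond1 {m : ℕ} (M : V → V → Fin (m + 1) → ℕ) : Prop :=
  ∀ v : V, (nbrs M v).Nonempty →
    ∃ R K : Finset V, v ∈ R ∧ v ∈ K ∧ IsCliqueCQ M ↑R ∧ IsCliqueCQ M ↑K ∧
      R.card + K.card = (nbrs M v).ncard + 2 ∧ R.card ≤ m + 2 ∧ K.card ≤ m + 2 ∧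
      (∀ u ∈ nbrs M v, u ∈ R ∨ u ∈ K) ∧
      ∀ a ∈ R, a ≠ v → ∀ b ∈ K, b ≠ v → ¬ CQAdj M a b

/-- Condition (2) of the class `𝒬ₙᵐ`: every triangle inside a clique has colour
sum `m - 1` along one of its two orientations (sums taken in `ℤ`). -/
def Cond2 {m : ℕ} (M : V → V → Fin (m + 1) → ℕ) : Prop :=
  ∀ v1 v2 v3 : V, v1 ≠ v2 → v2 ≠ v3 → v1 ≠ v3 →
    CQAdj M v1 v2 → CQAdj M v2 v3 → CQAdj M v1 v3 →
    ((colourOf M v2 v1 : ℤ) + (colourOf M v1 v3 : ℤ) + (colourOf M v3 v2 : ℤ)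
        = (m : ℤ) - 1 ∨
      ((m : ℤ) - colourOf M v2 v1) + ((m : ℤ) - colourOf M v1 v3)
          + ((m : ℤ) - colourOf M v3 v2) = (m : ℤ) - 1)

/-- Membership in the class `𝒬ₙᵐ` (`n` being the cardinality of the vertex set). -/
def MemQClass {m : ℕ} (M : V → V → Fin (m + 1) → ℕ) : Prop :=
  IsColouredQuiver M ∧ IsSimpleCQ M ∧ CQConnected M ∧ ¬ HasHole M ∧ Cond1 M ∧ Cond2 M

/-- An `Aₙ`-quiver: the underlying graph is the path graph on the vertex set. -/
def IsAnQuiver {m : ℕ} (M : V → V → Fin (m + 1) → ℕ) : Prop :=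
  ∃ e : Fin (Fintype.card V) ≃ V,
    ∀ i j : Fin (Fintype.card V),
      CQAdj M (e i) (e j) ↔ (i.val + 1 = j.val ∨ j.val + 1 = i.val)

/-- The coloured quiver on `Fin n` whose underlying graph is the path
`0 — 1 — ⋯ — (n-1)`, with the arrow `j+1 → j` coloured `c j` and the arrow
`j → j+1` coloured `m - c j`. -/
def pathQuiver (m n : ℕ) (c : ℕ → Fin (m + 1)) :
    Fin n → Fin n → Fin (m + 1) → ℕ := fun i j d =>
  if j.val + 1 = i.val ∧ d = c j.val then 1
  else if i.val + 1 = j.val ∧ d = (c i.val).rev then 1 else 0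

/-- Delete all arrows between vertices of `S`. -/
def deleteArrows {m : ℕ} (M : V → V → Fin (m + 1) → ℕ) (S : Finset V) :
    V → V → Fin (m + 1) → ℕ := fun i j c =>
  if i ∈ S ∧ j ∈ S then 0 else M i j c

/-- The connected component of `u` is an `A_k`-quiver (a path) for some `k ≥ 1`. -/
def ComponentIsPath {m : ℕ} (M : V → V → Fin (m + 1) → ℕ) (u : V) : Prop :=
  ∃ (k : ℕ) (x : Fin k → V), 1 ≤ k ∧ Function.Injective x ∧
    Set.range x = {w | Relation.ReflTransGen (CQAdj M) u w} ∧
    ∀ i j : Fin k, CQAdj M (x i) (x j) ↔ (i.val + 1 = j.val ∨ j.val + 1 = i.val)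

/-- An almost extremal clique: deleting its arrows leaves a connected component
which is an `A_k`-quiver for some `k ≥ 1`. -/
def AlmostExtremalClique {m : ℕ} (M : V → V → Fin (m + 1) → ℕ) (S : Finset V) : Prop :=
  IsCliqueCQ M ↑S ∧ ∃ u : V, ComponentIsPath (deleteArrows M S) u

/-- An extremal clique: deleting its arrows leaves a single-vertex component. -/
def ExtremalClique {m : ℕ} (M : V → V → Fin (m + 1) → ℕ) (S : Finset V) : Prop :=
  IsCliqueCQ M ↑S ∧
    ∃ u : V, {w | Relation.ReflTransGen (CQAdj (deleteArrows M S)) u w} = {u}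

/-- A coloured clique structure on a vertex type: colours `c i j ∈ {0,…,m}` with
skew-symmetry `c j i = m - c i j` and the triangle condition. -/
def IsCliqueColouring (m : ℕ) {W : Type} (c : W → W → ℕ) : Prop :=
  (∀ i j : W, i ≠ j → c i j ≤ m) ∧
  (∀ i j : W, i ≠ j → c i j + c j i = m) ∧
  ∀ i j l : W, i ≠ j → j ≠ l → i ≠ l →
    ((c i j : ℤ) + (c j l : ℤ) + (c l i : ℤ) = (m : ℤ) - 1 ∨
      (c i j : ℤ) + (c j l : ℤ) + (c l i : ℤ) = 2 * (m : ℤ) + 1)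

/-- Cyclic successor in `Fin k`. -/
def cyc {k : ℕ} (i : Fin k) : Fin k :=
  ⟨(i.val + 1) % k, Nat.mod_lt _ i.pos⟩

/-- The weight of the Hamiltonian cycle `x 0 → x 1 → ⋯ → x (k-1) → x 0`:
the sum of the colours of its arrows. -/
def cycleWeight {W : Type} (c : W → W → ℕ) {k : ℕ} (x : Fin k → W) : ℤ :=
  ∑ i : Fin k, (c (x i) (x (cyc i)) : ℤ)

/-- The Hamiltonian cycle on `k+1` vertices obtained from the cycle
`x 0 → ⋯ → x (k-1) → x 0` by inserting the vertex `x (Fin.last k)`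
immediately after `x j`. -/
def insertAfter {W : Type} {k : ℕ} (x : Fin (k + 1) → W) (j : Fin k) :
    Fin (k + 1) → W := fun i =>
  if i = 0 then x (Fin.last k)
  else x (Fin.castSucc ⟨(j.val + i.val) % k, Nat.mod_lt _ j.pos⟩)

section Aux
variable {m n : ℕ}
lemma last_ne_zero' (hm : 1 ≤ m) : (Fin.last m : Fin (m+1)) ≠ 0 := by
  simp [Fin.ext_iff]; omega
lemma rev_eq_zero_iff' (a : Fin (m+1)) : a.rev = 0 ↔ a = Fin.last m := by
  rw [← Fin.last_sub, sub_eq_zero, eq_comm]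
lemma rev_eq_last_iff' (a : Fin (m+1)) : a.rev = Fin.last m ↔ a = 0 := by
  rw [← Fin.last_sub, sub_eq_self]
lemma rev_add_one' (a : Fin (m+1)) : (a+1).rev = a.rev - 1 := by
  rw [← Fin.last_sub, ← Fin.last_sub]; abel
lemma rev_sub_one' (a : Fin (m+1)) : (a-1).rev = a.rev + 1 := by
  rw [← Fin.last_sub, ← Fin.last_sub]; abel
lemma pq_left {c : ℕ → Fin (m+1)} {i k : Fin n} (h : k.val + 1 = i.val) (d : Fin (m+1)) :
    pathQuiver m n c i k d = if d = c k.val then 1 else 0 := by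
  have h2 : ¬ i.val + 1 = k.val := by omega
  simp [pathQuiver, h, h2]
lemma pq_right {c : ℕ → Fin (m+1)} {i k : Fin n} (h : i.val + 1 = k.val) (d : Fin (m+1)) :
    pathQuiver m n c i k d = if d = (c i.val).rev then 1 else 0 := by
  have h2 : ¬ k.val + 1 = i.val := by omega
  simp [pathQuiver, h, h2]
lemma pq_far {c : ℕ → Fin (m+1)} {i k : Fin n} (h1 : ¬ k.val + 1 = i.val)
    (h2 : ¬ i.val + 1 = k.val) (d : Fin (m+1)) :
    pathQuiver m n c i k d = 0 := by
  simp [pathQuiver, h1, h2]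
lemma pq_sum (c : ℕ → Fin (m+1)) (i k : Fin n) :
    ∑ t : Fin (m+1), (pathQuiver m n c i k t : ℤ) =
      if k.val + 1 = i.val ∨ i.val + 1 = k.val then 1 else 0 := by
  by_cases h1 : k.val + 1 = i.val
  · simp only [fun d => pq_left (c := c) h1 d]
    simp [h1, Finset.sum_ite_eq']
  · by_cases h2 : i.val + 1 = k.val
    · simp only [fun d => pq_right (c := c) h2 d]
      simp [h1, h2, Finset.sum_ite_eq']
    · simp only [fun d => pq_far (c := c) h1 h2 d]
      simp [h1, h2]
lemma pq_filter_sum (c : ℕ → Fin (m+1)) (i k : Fin n) (d : Fin (m+1)) :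
    ∑ t ∈ Finset.univ.filter (fun t => t ≠ d), (pathQuiver m n c i k t : ℤ) =
      (if k.val + 1 = i.val ∨ i.val + 1 = k.val then 1 else 0)
        - (pathQuiver m n c i k d : ℤ) := by
  rw [Finset.filter_ne', Finset.sum_erase_eq_sub (Finset.mem_univ d), pq_sum]

lemma mutate_leaf (hm : 1 ≤ m) (hn : 2 ≤ n) (c : ℕ → Fin (m+1)) (j : Fin n)
    (hj : j.val = n - 1) :
    mutate (pathQuiver m n c) j
      = pathQuiver m n (Function.update c (n-2) (c (n-2) + 1)) := by
  set c' := Function.update c (n-2) (c (n-2) + 1) with hc'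
  have hc'v : c' (n-2) = c (n-2) + 1 := Function.update_self _ _ _
  have hc'o : ∀ r, r ≠ n-2 → c' r = c r := fun r hr => Function.update_of_ne hr _ _
  funext i k d
  simp only [mutate]
  split_ifs with hk hi
  · -- k = j
    have hkv : k.val = n - 1 := by rw [hk, hj]
    by_cases h2 : i.val + 1 = k.val
    · have hi2 : i.val = n - 2 := by omega
      rw [pq_right h2, pq_right h2, hi2, hc'v, rev_add_one']
      exact if_congr (eq_sub_iff_add_eq).symm rfl rfl
    · have h1 : ¬ k.val + 1 = i.val := by have := i.isLt; omega
      rw [pq_far h1 h2, pq_far h1 h2]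
  · -- i = j, k ≠ j
    have hiv : i.val = n - 1 := by rw [hi, hj]
    have hkv : k.val ≠ n - 1 := fun h => hk (Fin.ext (by omega))
    by_cases h1 : k.val + 1 = i.val
    · have hk2 : k.val = n - 2 := by omega
      rw [pq_left h1, pq_left h1, hk2, hc'v]
      exact if_congr (sub_eq_iff_eq_add) rfl rfl
    · have h2 : ¬ i.val + 1 = k.val := by have := k.isLt; omega
      rw [pq_far h1 h2, pq_far h1 h2]
  · -- generic
    have hiv : i.val ≠ n - 1 := fun h => hi (Fin.ext (by omega))
    have hkv : k.val ≠ n - 1 := fun h => hk (Fin.ext (by omega))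
    have hin := i.isLt; have hkn := k.isLt
    have hRHS : pathQuiver m n c' i k d = pathQuiver m n c i k d := by
      by_cases h1 : k.val + 1 = i.val
      · rw [pq_left h1, pq_left h1, hc'o _ (by omega)]
      · by_cases h2 : i.val + 1 = k.val
        · rw [pq_right h2, pq_right h2, hc'o _ (by omega)]
        · rw [pq_far h1 h2, pq_far h1 h2]
    rw [hRHS, pq_filter_sum]
    have hji : ¬ j.val + 1 = i.val := by omega
    have hjk2 : ¬ j.val + 1 = k.val := by omega
    by_cases hi2 : i.val + 1 = j.val
    · by_cases hk2 : k.val + 1 = j.val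
      · -- i = k, C1 cancellation
        have h1 : ¬ k.val + 1 = i.val := by omega
        have h2 : ¬ i.val + 1 = k.val := by omega
        have hckci : c k.val = c i.val := by rw [show k.val = i.val from by omega]
        rw [pq_far h1 h2, if_neg (by omega : ¬(k.val + 1 = i.val ∨ i.val + 1 = k.val))]
        rw [pq_right hi2, pq_right hi2, pq_right hi2, pq_left hk2, pq_left hk2, pq_left hk2,
          hckci]
        by_cases hA : c i.val = 0
        · have e1 : (d - 1 = Fin.last m) ↔ (d = 0) := by
            rw [sub_eq_iff_eq_add, Fin.last_add_one]
          have e2 : (d + 1 = (0 : Fin (m+1))) ↔ (d = Fin.last m) := by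
            rw [← Fin.last_add_one]; exact add_left_inj 1
          simp only [hA, Fin.rev_zero, e1, e2, if_pos rfl]
          split_ifs <;> norm_num
        · have f1 : ((0 : Fin (m+1)) = c ↑i) = False := eq_false (fun h => hA h.symm)
          have f2 : (Fin.last m = (c ↑i).rev) = False :=
            eq_false (fun h => hA ((rev_eq_last_iff' _).mp h.symm))
          simp only [f1, f2, if_false]
          simp only [Nat.cast_zero, mul_zero, zero_mul, add_zero, sub_zero, sub_self]
          norm_num
      · -- i adj j, k not adj: P j k far
        have hjkf : ∀ t, pathQuiver m n c j k t = 0 :=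
          pq_far (by omega) hjk2
        rw [hjkf, hjkf, hjkf]
        simp only [Nat.cast_zero, mul_zero, zero_mul, add_zero, sub_zero, sub_self]
        by_cases h1 : k.val + 1 = i.val
        · rw [pq_left h1, if_pos (Or.inl h1)]
          split_ifs <;> norm_num
        · have h2 : ¬ i.val + 1 = k.val := by omega
          rw [pq_far h1 h2, if_neg (by omega : ¬(k.val + 1 = i.val ∨ i.val + 1 = k.val))]
          norm_num
    · -- i not adj j: P i j far
      have hijf : ∀ t, pathQuiver m n c i j t = 0 := pq_far hji hi2
      rw [hijf, hijf, hijf]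
      simp only [Nat.cast_zero, mul_zero, zero_mul, add_zero, sub_zero, sub_self, zero_add]
      by_cases h1 : k.val + 1 = i.val
      · rw [pq_left h1, if_pos (Or.inl h1)]
        split_ifs <;> norm_num
      · by_cases h2 : i.val + 1 = k.val
        · rw [pq_right h2, if_pos (Or.inr h2)]
          split_ifs <;> norm_num
        · rw [pq_far h1 h2, if_neg (by omega : ¬(k.val + 1 = i.val ∨ i.val + 1 = k.val))]
          norm_num

lemma mutate_interior (hm : 1 ≤ m) (c : ℕ → Fin (m+1)) (v : ℕ) (hv1 : 1 ≤ v)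
    (hv2 : v + 1 < n) (j : Fin n) (hj : j.val = v)
    (hA : c (v-1) ≠ 0) (hB : c v ≠ Fin.last m) :
    mutate (pathQuiver m n c) j
      = pathQuiver m n
          (Function.update (Function.update c (v-1) (c (v-1) + 1)) v (c v - 1)) := by
  set c' := Function.update (Function.update c (v-1) (c (v-1) + 1)) v (c v - 1) with hc'
  have hc'v : c' v = c v - 1 := Function.update_self _ _ _
  have hc'v1 : c' (v-1) = c (v-1) + 1 := by
    rw [hc', Function.update_of_ne (by omega), Function.update_self]
  have hc'o : ∀ r, r ≠ v - 1 → r ≠ v → c' r = c r := fun r h1 h2 => by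
    rw [hc', Function.update_of_ne h2, Function.update_of_ne h1]
  funext i k d
  simp only [mutate]
  split_ifs with hk hi
  · -- k = j
    have hkv : k.val = v := by rw [hk, hj]
    by_cases h1 : k.val + 1 = i.val
    · rw [pq_left h1, pq_left h1, hkv, hc'v]
      exact if_congr (eq_sub_iff_add_eq).symm rfl rfl
    · by_cases h2 : i.val + 1 = k.val
      · have hi2 : i.val = v - 1 := by omega
        rw [pq_right h2, pq_right h2, hi2, hc'v1, rev_add_one']
        exact if_congr (eq_sub_iff_add_eq).symm rfl rfl
      · rw [pq_far h1 h2, pq_far h1 h2]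
  · -- i = j
    have hiv : i.val = v := by rw [hi, hj]
    by_cases h1 : k.val + 1 = i.val
    · have hk2 : k.val = v - 1 := by omega
      rw [pq_left h1, pq_left h1, hk2, hc'v1]
      exact if_congr (sub_eq_iff_eq_add) rfl rfl
    · by_cases h2 : i.val + 1 = k.val
      · rw [pq_right h2, pq_right h2, hiv, hc'v, rev_sub_one']
        exact if_congr (sub_eq_iff_eq_add) rfl rfl
      · rw [pq_far h1 h2, pq_far h1 h2]
  · -- generic
    have hiv : i.val ≠ v := fun h => hi (Fin.ext (by omega))
    have hkv : k.val ≠ v := fun h => hk (Fin.ext (by omega))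
    have hin := i.isLt; have hkn := k.isLt
    have hRHS : pathQuiver m n c' i k d = pathQuiver m n c i k d := by
      by_cases h1 : k.val + 1 = i.val
      · rw [pq_left h1, pq_left h1, hc'o _ (by omega) (by omega)]
      · by_cases h2 : i.val + 1 = k.val
        · rw [pq_right h2, pq_right h2, hc'o _ (by omega) (by omega)]
        · rw [pq_far h1 h2, pq_far h1 h2]
    have hPjk0 : pathQuiver m n c j k (0 : Fin (m+1)) = 0 := by
      by_cases hk1 : k.val + 1 = j.val
      · rw [pq_left hk1]
        have : (0 : Fin (m+1)) ≠ c k.val := by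
          rw [show k.val = v - 1 from by omega]; exact fun h => hA h.symm
        rw [if_neg this]
      · by_cases hk2 : j.val + 1 = k.val
        · rw [pq_right hk2, hj]
          exact if_neg (fun h => hB ((rev_eq_zero_iff' _).mp h.symm))
        · rw [pq_far hk1 hk2]
    have hPijl : pathQuiver m n c i j (Fin.last m) = 0 := by
      by_cases hi1 : j.val + 1 = i.val
      · rw [pq_left hi1, hj]
        exact if_neg (fun h => hB h.symm)
      · by_cases hi2 : i.val + 1 = j.val
        · rw [pq_right hi2]
          have : Fin.last m ≠ (c i.val).rev := by
            rw [show i.val = v - 1 from by omega]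
            exact fun h => hA ((rev_eq_last_iff' _).mp h.symm)
          rw [if_neg this]
        · rw [pq_far hi1 hi2]
    rw [hRHS, pq_filter_sum, hPjk0, hPijl]
    simp only [Nat.cast_zero, mul_zero, zero_mul, add_zero, sub_zero, sub_self, zero_add]
    by_cases h1 : k.val + 1 = i.val
    · rw [pq_left h1, if_pos (Or.inl h1)]
      split_ifs <;> norm_num
    · by_cases h2 : i.val + 1 = k.val
      · rw [pq_right h2, if_pos (Or.inr h2)]
        split_ifs <;> norm_num
      · rw [pq_far h1 h2, if_neg (by omega : ¬(k.val + 1 = i.val ∨ i.val + 1 = k.val))]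
        norm_num


lemma pq_congr (c c' : ℕ → Fin (m+1)) (h : ∀ i, i + 1 < n → c i = c' i) :
    pathQuiver m n c = pathQuiver m n c' := by
  funext i k d
  by_cases h1 : k.val + 1 = i.val
  · rw [pq_left h1, pq_left h1, h k.val (by have := i.isLt; omega)]
  · by_cases h2 : i.val + 1 = k.val
    · rw [pq_right h2, pq_right h2, h i.val (by have := k.isLt; omega)]
    · rw [pq_far h1 h2, pq_far h1 h2]

lemma flush (hm : 1 ≤ m) : ∀ (dl t : ℕ) (c : ℕ → Fin (m+1)), t + 1 + dl = n → t < n - 1 →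
    c t = Fin.last m → (∀ i, t < i → i < n - 1 → c i = 0) →
    MutEquiv (pathQuiver m n c) (pathQuiver m n (Function.update c t (0 : Fin (m+1)))) := by
  intro dl
  induction dl with
  | zero => intro t c h1 h2 _ _; omega
  | succ dd ih =>
    intro t c h1 h2 hct htail
    by_cases hd : n = t + 2
    · have heq := mutate_leaf hm (by omega) c ⟨n-1, by omega⟩ rfl
      have hqq : Function.update c (n-2) (c (n-2) + 1) = Function.update c t (0:Fin (m+1)) := by
        rw [show n - 2 = t from by omega, hct, Fin.last_add_one]
      rw [hqq] at heq
      exact Relation.EqvGen.rel _ _ ⟨_, heq⟩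
    · have hn3 : t + 3 ≤ n := by omega
      have hct1 : c (t+1) = 0 := htail (t+1) (by omega) (by omega)
      have hz : (0:Fin (m+1)) - 1 = Fin.last m := by
        rw [eq_comm, eq_sub_iff_add_eq, Fin.last_add_one]
      have heq := mutate_interior (n := n) hm c (t+1) (by omega) (by omega) ⟨t+1, by omega⟩ rfl
        (by rw [Nat.add_sub_cancel, hct]; exact last_ne_zero' hm)
        (by rw [hct1]; exact fun h => last_ne_zero' hm h.symm)
      have hc1 : Function.update (Function.update c (t+1-1) (c (t+1-1) + 1)) (t+1) (c (t+1) - 1)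
          = Function.update (Function.update c t (0:Fin (m+1))) (t+1) (Fin.last m) := by
        rw [Nat.add_sub_cancel, hct, hct1, Fin.last_add_one, hz]
      rw [hc1] at heq
      have step1 : MutEquiv (pathQuiver m n c)
          (pathQuiver m n (Function.update (Function.update c t (0:Fin (m+1))) (t+1) (Fin.last m))) :=
        Relation.EqvGen.rel _ _ ⟨_, heq⟩
      have step2 := ih (t+1) (Function.update (Function.update c t (0:Fin (m+1))) (t+1) (Fin.last m))
        (by omega) (by omega) (Function.update_self _ _ _)
        (fun i hi1 hi2 => by
          rw [Function.update_of_ne (by omega), Function.update_of_ne (by omega)]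
          exact htail i (by omega) hi2)
      have hupd : Function.update (Function.update (Function.update c t (0:Fin (m+1))) (t+1)
            (Fin.last m)) (t+1) (0:Fin (m+1)) = Function.update c t (0:Fin (m+1)) := by
        funext r
        by_cases hr : r = t + 1
        · subst hr
          rw [Function.update_self, Function.update_of_ne (by omega)]
          exact (hct1).symm
        · rw [Function.update_of_ne hr, Function.update_of_ne hr]
      rw [hupd] at step2
      exact Relation.EqvGen.trans _ _ _ step1 step2

lemma push (hm : 1 ≤ m) (c : ℕ → Fin (m+1)) (j : ℕ) (hj : j < n - 1) (ha : c j ≠ 0)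
    (htail : ∀ i, j < i → i < n - 1 → c i = 0) :
    MutEquiv (pathQuiver m n c) (pathQuiver m n (Function.update c j (c j + 1))) := by
  by_cases hd : n = j + 2
  · have heq := mutate_leaf hm (by omega) c ⟨n-1, by omega⟩ rfl
    rw [show n - 2 = j from by omega] at heq
    exact Relation.EqvGen.rel _ _ ⟨_, heq⟩
  · have hn3 : j + 3 ≤ n := by omega
    have hcj1 : c (j+1) = 0 := htail (j+1) (by omega) (by omega)
    have hz : (0:Fin (m+1)) - 1 = Fin.last m := by
      rw [eq_comm, eq_sub_iff_add_eq, Fin.last_add_one]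
    have heq := mutate_interior (n := n) hm c (j+1) (by omega) (by omega) ⟨j+1, by omega⟩ rfl
      (by rw [Nat.add_sub_cancel]; exact ha)
      (by rw [hcj1]; exact fun h => last_ne_zero' hm h.symm)
    have hc1 : Function.update (Function.update c (j+1-1) (c (j+1-1) + 1)) (j+1) (c (j+1) - 1)
        = Function.update (Function.update c j (c j + 1)) (j+1) (Fin.last m) := by
      rw [Nat.add_sub_cancel, hcj1, hz]
    rw [hc1] at heq
    have step1 : MutEquiv (pathQuiver m n c)
        (pathQuiver m n (Function.update (Function.update c j (c j + 1)) (j+1) (Fin.last m))) :=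
      Relation.EqvGen.rel _ _ ⟨_, heq⟩
    have step2 := flush (n := n) hm (n - (j+2)) (j+1)
      (Function.update (Function.update c j (c j + 1)) (j+1) (Fin.last m))
      (by omega) (by omega) (Function.update_self _ _ _)
      (fun i hi1 hi2 => by
        rw [Function.update_of_ne (by omega), Function.update_of_ne (by omega)]
        exact htail i (by omega) hi2)
    have hupd : Function.update (Function.update (Function.update c j (c j + 1)) (j+1)
          (Fin.last m)) (j+1) (0:Fin (m+1)) = Function.update c j (c j + 1) := by
      funext r
      by_cases hr : r = j + 1
      · subst hr
        rw [Function.update_self, Function.update_of_ne (by omega)]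
        exact (hcj1).symm
      · rw [Function.update_of_ne hr, Function.update_of_ne hr]
    rw [hupd] at step2
    exact Relation.EqvGen.trans _ _ _ step1 step2

lemma loop (hm : 1 ≤ m) : ∀ (K : ℕ) (c : ℕ → Fin (m+1)) (j : ℕ), j < n - 1 →
    m + 1 ≤ (c j).val + K → (∀ i, j < i → i < n - 1 → c i = 0) →
    MutEquiv (pathQuiver m n c) (pathQuiver m n (Function.update c j (0:Fin (m+1)))) := by
  intro K
  induction K with
  | zero => intro c j h1 h2 _; have := (c j).isLt; omega
  | succ K ih =>
    intro c j hj hK htail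
    by_cases h0 : c j = 0
    · rw [show Function.update c j (0:Fin (m+1)) = c from by rw [← h0]; exact Function.update_eq_self j c]
      exact Relation.EqvGen.refl _
    · have hp := push hm c j hj h0 htail
      by_cases hl : c j = Fin.last m
      · have : Function.update c j (c j + 1) = Function.update c j (0:Fin (m+1)) := by
          rw [hl, Fin.last_add_one]
        rw [this] at hp; exact hp
      · have h2 := ih (Function.update c j (c j + 1)) j hj
          (by rw [Function.update_self, Fin.val_add_one, if_neg hl]; omega)
          (fun i hi1 hi2 => by
            rw [Function.update_of_ne (by omega)]; exact htail i hi1 hi2)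
        rw [Function.update_idem] at h2
        exact Relation.EqvGen.trans _ _ _ hp h2

lemma toZero (hm : 1 ≤ m) : ∀ (J : ℕ) (c : ℕ → Fin (m+1)),
    (∀ i, J ≤ i → i < n - 1 → c i = 0) →
    MutEquiv (pathQuiver m n c) (pathQuiver m n (fun _ => (0:Fin (m+1)))) := by
  intro J
  induction J with
  | zero =>
    intro c h
    rw [pq_congr c (fun _ => (0:Fin (m+1))) (fun i hi => h i (Nat.zero_le _) (by omega))]
    exact Relation.EqvGen.refl _
  | succ J ih =>
    intro c h
    by_cases hJ : J < n - 1
    · have hl := loop (n := n) hm (m+1) c J hJ (by omega) (fun i hi hi2 => h i (by omega) hi2)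
      refine Relation.EqvGen.trans _ _ _ hl (ih _ (fun i hi hi2 => ?_))
      by_cases hiJ : i = J
      · subst hiJ; exact Function.update_self _ _ _
      · rw [Function.update_of_ne hiJ]; exact h i (by omega) hi2
    · exact ih c (fun i hi hi2 => h i (by omega) hi2)

end Aux

/-- All colourations of `Aₙ` are mutation equivalent. -/
theorem path_colourations_mutEquiv (m n : ℕ) (hm : 1 ≤ m) (hn : 1 ≤ n)
    (c c' : ℕ → Fin (m + 1)) :
    MutEquiv (pathQuiver m n c) (pathQuiver m n c') :=
  Relation.EqvGen.trans _ _ _ (toZero hm (n-1) c (fun i hi hi2 => by omega))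
    (Relation.EqvGen.symm _ _ (toZero hm (n-1) c' (fun i hi hi2 => by omega)))

end MutClassAn
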